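/- If a sign pattern matrix A allows algebraic positivity, then every super-pattern of A allows algebraic positivity. -/

import Mathlib

/-- A real square matrix is algebraically positive if some real polynomial maps it
to an entrywise (strictly) positive matrix. -/
def AlgPos {n : ℕ} (A : Matrix (Fin n) (Fin n) ℝ) : Prop :=
  ∃ p : Polynomial ℝ, ∀ i j, 0 < (Polynomial.aeval A p) i j

/-- If a sign pattern matrix `A` allows algebraic positivity, then every
super-pattern `X` of `A` (i.e. `X i j = A i j` whenever `A i j ≠ 0`) allows
algebraic positivity. -/
theorem stmt3 {n : ℕ} (A X : Matrix (Fin n) (Fin n) SignType)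
    (hsuper : ∀ i j, A i j ≠ 0 → X i j = A i j)
    (hA : ∃ B : Matrix (Fin n) (Fin n) ℝ,
      (∀ i j, SignType.sign (B i j) = A i j) ∧ AlgPos B) :
    ∃ B : Matrix (Fin n) (Fin n) ℝ,
      (∀ i j, SignType.sign (B i j) = X i j) ∧ AlgPos B := by
  obtain ⟨B, hsign, p, hp⟩ := hA
  set C : Matrix (Fin n) (Fin n) ℝ :=
    fun i j => if A i j = 0 then ((X i j : ℤ) : ℝ) else 0 with hC
  have hcont : Continuous fun ε : ℝ => Polynomial.aeval (B + ε • C) p := by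
    exact (Polynomial.continuous_aeval p).comp
      (continuous_const.add (continuous_id.smul continuous_const))
  have hev : ∀ᶠ ε : ℝ in nhds 0,
      ∀ i j, 0 < (Polynomial.aeval (B + ε • C) p) i j := by
    rw [Filter.eventually_all]
    intro i
    rw [Filter.eventually_all]
    intro j
    have hc : Continuous fun ε : ℝ => (Polynomial.aeval (B + ε • C) p) i j :=
      (continuous_apply j).comp ((continuous_apply i).comp hcont)
    have h0 : 0 < (Polynomial.aeval (B + (0:ℝ) • C) p) i j := by
      simpa using hp i j
    have := hc.continuousAt (x := 0)
    exact continuousAt_const.eventually_lt this (by simpa using h0)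
  have hev' : ∀ᶠ ε : ℝ in nhdsWithin 0 (Set.Ioi 0),
      ∀ i j, 0 < (Polynomial.aeval (B + ε • C) p) i j :=
    nhdsWithin_le_nhds hev
  obtain ⟨ε, hεP, hεpos⟩ := (hev'.and self_mem_nhdsWithin).exists
  refine ⟨B + ε • C, ?_, p, hεP⟩
  intro i j
  by_cases h : A i j = 0
  · have hB0 : B i j = 0 := by
      have := hsign i j; rw [h] at this
      exact sign_eq_zero_iff.mp this
    have : (B + ε • C) i j = ε * ((X i j : ℤ) : ℝ) := by
      rw [Matrix.add_apply, Matrix.smul_apply, hB0, hC]; simp [h]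
    rw [this]
    cases hx : X i j <;> simp
    · exact sign_neg (by nlinarith [hεpos])
    · exact sign_pos (by nlinarith [hεpos])
  · have hXA := hsuper i j h
    have : (B + ε • C) i j = B i j := by
      rw [Matrix.add_apply, Matrix.smul_apply, hC]; simp [h]
    rw [this, hsign i j, hXA]
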